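/- If B is a t-(n,k,λ;q) design, then B^⊥ = {K^⊥ : K ∈ B} is a t-(n,n-k,λ^⊥;q) design, where λ^⊥ = λ · [n-t choose k]_q / [n-t choose k-t]_q. -/

import Mathlib

open scoped Classical
open Matrix

variable {F : Type*} [Field F] [Fintype F] {n : ℕ}

/-- Orthogonal complement w.r.t. the standard bilinear form on `Fin n → F`. -/
def stdPerp (K : Submodule F (Fin n → F)) : Submodule F (Fin n → F) where
  carrier := {x | ∀ y ∈ K, ∑ i, x i * y i = 0}
  add_mem' := by
    intro a b ha hb y hy
    simp only [Set.mem_setOf_eq] at *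
    simp [Pi.add_apply, add_mul, Finset.sum_add_distrib, ha y hy, hb y hy]
  zero_mem' := by intro y hy; simp
  smul_mem' := by
    intro c a ha y hy
    simp only [Set.mem_setOf_eq] at *
    simp [Pi.smul_apply, smul_eq_mul, mul_assoc, ← Finset.mul_sum, ha y hy]

/-- Action of a matrix on subspaces. -/
def mact (A : Matrix (Fin n) (Fin n) F) (K : Submodule F (Fin n → F)) :
    Submodule F (Fin n → F) :=
  K.map A.mulVecLin

/-- A `t-(n,k,λ;q)` design over the finite field `F`. -/
def IsDesign (F : Type*) [Field F] [Fintype F] (n t k lam : ℕ)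
    (B : Finset (Submodule F (Fin n → F))) : Prop :=
  (∀ K ∈ B, Module.finrank F K = k) ∧
  ∀ T : Submodule F (Fin n → F), Module.finrank F T = t →
    (B.filter (fun K => T ≤ K)).card = lam

/-- Gaussian binomial coefficient `[m choose j]_q`. -/
def gaussBinom (q m j : ℕ) : ℕ :=
  (∏ i ∈ Finset.range j, (q ^ (m - i) - 1)) / (∏ i ∈ Finset.range j, (q ^ (j - i) - 1))

/-- A large set `LS_q[N](t,k,n)`. -/
def IsLargeSet (F : Type*) [Field F] [Fintype F] (n t k lam N : ℕ)
    (L : Finset (Finset (Submodule F (Fin n → F)))) : Prop :=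
  L.card = N ∧
  (∀ B ∈ L, IsDesign F n t k lam B) ∧
  (∀ B ∈ L, ∀ B' ∈ L, B ≠ B' → Disjoint B B') ∧
  (∀ K : Submodule F (Fin n → F), Module.finrank F K = k ↔ ∃ B ∈ L, K ∈ B)

/-- Transpose as an element of the general linear group. -/
def GLT (α : Matrix.GeneralLinearGroup (Fin n) F) : Matrix.GeneralLinearGroup (Fin n) F :=
  ⟨(↑α : Matrix (Fin n) (Fin n) F)ᵀ, (↑α⁻¹ : Matrix (Fin n) (Fin n) F)ᵀ,
    by rw [← Matrix.transpose_mul, ← Matrix.transpose_one]; exact congrArg Matrix.transpose α.inv_mul,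
    by rw [← Matrix.transpose_mul, ← Matrix.transpose_one]; exact congrArg Matrix.transpose α.mul_inv⟩

section AuxPerp
open Module

variable {F : Type*} [Field F] [Fintype F] {n : ℕ}

set_option linter.unusedSectionVars false

noncomputable def dotForm : LinearMap.BilinForm F (Fin n → F) :=
  LinearMap.mk₂ F (fun x y => ∑ i, x i * y i)
    (by intro x x' y; simp [add_mul, Finset.sum_add_distrib])
    (by intro c x y; simp [Finset.mul_sum, mul_assoc])
    (by intro x y y'; simp [mul_add, Finset.sum_add_distrib])
    (by intro c x y; simp only [Pi.smul_apply, smul_eq_mul, Finset.mul_sum]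
        apply Finset.sum_congr rfl; intros; ring)

lemma dotForm_apply (x y : Fin n → F) : dotForm x y = ∑ i, x i * y i := rfl

lemma dotForm_symm : (dotForm (F := F) (n := n)).IsSymm := by
  refine ⟨fun x y => ?_⟩; simp [dotForm_apply, mul_comm]

lemma dotForm_nondeg : (dotForm (F := F) (n := n)).Nondegenerate := by
  refine ⟨fun x hx => ?_, fun x hx => ?_⟩
  funext i
  have := hx (Pi.single i 1)
  simpa [dotForm_apply, Pi.single_apply, Finset.sum_ite_eq'] using this
  funext i
  have := hx (Pi.single i 1)
  simpa [dotForm_apply, Pi.single_apply, Finset.sum_ite_eq'] using this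

lemma stdPerp_eq (K : Submodule F (Fin n → F)) : stdPerp K = dotForm.orthogonal K := by
  ext x
  constructor
  · intro hx y hy
    have := hx y hy
    simpa [LinearMap.BilinForm.IsOrtho, dotForm_apply, mul_comm] using this
  · intro hx y hy
    have := hx y hy
    simpa [LinearMap.BilinForm.IsOrtho, dotForm_apply, mul_comm] using this

lemma finrank_stdPerp (K : Submodule F (Fin n → F)) :
    Module.finrank F (stdPerp K) = n - Module.finrank F K := by
  rw [stdPerp_eq]
  rw [LinearMap.BilinForm.finrank_orthogonal dotForm_nondeg]
  simp [Module.finrank_pi]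

lemma stdPerp_stdPerp (K : Submodule F (Fin n → F)) : stdPerp (stdPerp K) = K := by
  rw [stdPerp_eq, stdPerp_eq]
  exact LinearMap.BilinForm.orthogonal_orthogonal dotForm_nondeg dotForm_symm.isRefl K

lemma le_stdPerp_iff {T K : Submodule F (Fin n → F)} : T ≤ stdPerp K ↔ K ≤ stdPerp T := by
  constructor <;> intro h x hx y hy
  · have := h hy x hx; simpa [mul_comm] using this
  · have := h hy x hx; simpa [mul_comm] using this

noncomputable instance : Fintype (Submodule F (Fin n → F)) := by
  haveI : Finite (Submodule F (Fin n → F)) :=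
    Finite.of_injective (fun P => (P : Set (Fin n → F))) SetLike.coe_injective
  exact Fintype.ofFinite _

noncomputable def subFinset (P : Submodule F (Fin n → F)) : Finset (Fin n → F) :=
  Set.toFinset (P : Set (Fin n → F))

lemma mem_subFinset {P : Submodule F (Fin n → F)} {x : Fin n → F} :
    x ∈ subFinset P ↔ x ∈ P := by simp [subFinset]

lemma subFinset_card (P : Submodule F (Fin n → F)) :
    (subFinset P).card = Fintype.card F ^ finrank F P := by
  rw [subFinset, Set.toFinset_card]
  exact card_eq_pow_finrank

lemma subFinset_mono {P Q : Submodule F (Fin n → F)} (h : P ≤ Q) :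
    subFinset P ⊆ subFinset Q := by
  intro x hx; rw [mem_subFinset] at *; exact h hx

lemma inf_span_eq_bot {U : Submodule F (Fin n → F)} {v : Fin n → F} (hv : v ∉ U) :
    U ⊓ (F ∙ v) = ⊥ := by
  rw [eq_bot_iff]
  intro x hx
  obtain ⟨hxU, hxv⟩ := Submodule.mem_inf.mp hx
  rw [Submodule.mem_span_singleton] at hxv
  obtain ⟨c, rfl⟩ := hxv
  rcases eq_or_ne c 0 with rfl | hc
  · simp
  · exact absurd ((U.smul_mem_iff hc).mp hxU) hv

lemma finrank_sup_span {U : Submodule F (Fin n → F)} {v : Fin n → F} (hv : v ∉ U) :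
    finrank F ↥(U ⊔ (F ∙ v)) = finrank F U + 1 := by
  have hv0 : v ≠ 0 := fun h => hv (h ▸ U.zero_mem)
  have := Submodule.finrank_sup_add_finrank_inf_eq U (F ∙ v)
  rw [inf_span_eq_bot hv, finrank_span_singleton hv0, finrank_bot] at this
  omega

/-- Counting the `(i+1)`-dimensional subspaces between `U` and `X`. -/
lemma line_count (U X : Submodule F (Fin n → F)) (hUX : U ≤ X) :
    (Finset.univ.filter fun U' : Submodule F (Fin n → F) =>
        U ≤ U' ∧ U' ≤ X ∧ finrank F U' = finrank F U + 1).card *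
      (Fintype.card F ^ (finrank F U + 1) - Fintype.card F ^ finrank F U) =
    Fintype.card F ^ finrank F X - Fintype.card F ^ finrank F U := by
  classical
  set q := Fintype.card F
  set i := finrank F U
  set t := Finset.univ.filter fun U' : Submodule F (Fin n → F) =>
      U ≤ U' ∧ U' ≤ X ∧ finrank F U' = i + 1 with ht
  have hcard : (subFinset X \ subFinset U).card =
      ∑ U' ∈ t, ((subFinset X \ subFinset U).filter
        (fun v => U ⊔ (F ∙ v) = U')).card := by
    apply Finset.card_eq_sum_card_fiberwise
    intro v hv
    rw [Finset.mem_coe, Finset.mem_sdiff, mem_subFinset, mem_subFinset] at hv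
    rw [Finset.mem_coe, ht, Finset.mem_filter]
    refine ⟨Finset.mem_univ _, le_sup_left, sup_le hUX ?_, finrank_sup_span hv.2⟩
    rw [Submodule.span_singleton_le_iff_mem]; exact hv.1
  have hfiber : ∀ U' ∈ t, ((subFinset X \ subFinset U).filter
      (fun v => U ⊔ (F ∙ v) = U')).card = q ^ (i + 1) - q ^ i := by
    intro U' hU'
    rw [ht, Finset.mem_filter] at hU'
    obtain ⟨-, hUU', hU'X, hrk⟩ := hU'
    have : (subFinset X \ subFinset U).filter (fun v => U ⊔ (F ∙ v) = U') =
        subFinset U' \ subFinset U := by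
      ext v
      simp only [Finset.mem_filter, Finset.mem_sdiff, mem_subFinset]
      constructor
      · rintro ⟨⟨hvX, hvU⟩, rfl⟩
        exact ⟨(le_sup_right : (F ∙ v) ≤ U ⊔ (F ∙ v)) (Submodule.mem_span_singleton_self v), hvU⟩
      · rintro ⟨hvU', hvU⟩
        refine ⟨⟨hU'X hvU', hvU⟩, ?_⟩
        apply Submodule.eq_of_le_of_finrank_le
          (sup_le hUU' (by rw [Submodule.span_singleton_le_iff_mem]; exact hvU'))
        rw [hrk, finrank_sup_span hvU]
    rw [this, Finset.card_sdiff_of_subset (subFinset_mono hUU'), subFinset_card, subFinset_card, hrk]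
  rw [Finset.sum_congr rfl hfiber, Finset.sum_const, smul_eq_mul] at hcard
  rw [← hcard, Finset.card_sdiff_of_subset (subFinset_mono hUX), subFinset_card, subFinset_card]

end AuxPerp

section AuxGauss

def gbN (q : ℕ) : ℕ → ℕ → ℕ
  | _, 0 => 1
  | 0, _+1 => 0
  | m+1, r+1 => gbN q m (r+1) + q ^ (m - r) * gbN q m r

@[simp] lemma gbN_zero (q m : ℕ) : gbN q m 0 = 1 := by cases m <;> rfl

lemma gbN_succ (q m r : ℕ) :
    gbN q (m+1) (r+1) = gbN q m (r+1) + q ^ (m - r) * gbN q m r := rfl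

lemma gbN_of_lt {q m r : ℕ} (h : m < r) : gbN q m r = 0 := by
  induction m generalizing r with
  | zero => cases r with
    | zero => omega
    | succ r => rfl
  | succ m ih =>
    cases r with
    | zero => omega
    | succ r => rw [gbN_succ, ih (by omega), ih (by omega)]; ring

@[simp] lemma gbN_self (q m : ℕ) : gbN q m m = 1 := by
  induction m with
  | zero => rfl
  | succ m ih => rw [gbN_succ, gbN_of_lt (by omega), ih]; simp

def Pprod (q m r : ℕ) : ℕ := ∏ i ∈ Finset.range r, (q ^ (m - i) - 1)

@[simp] lemma Pprod_zero (q m : ℕ) : Pprod q m 0 = 1 := rfl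

lemma Pprod_succ (q m r : ℕ) : Pprod q m (r+1) = Pprod q m r * (q ^ (m - r) - 1) := by
  rw [Pprod, Finset.prod_range_succ]; rfl

lemma Pprod_succ' (q m r : ℕ) : Pprod q (m+1) (r+1) = (q ^ (m+1) - 1) * Pprod q m r := by
  rw [Pprod, Finset.prod_range_succ', Nat.sub_zero, mul_comm]
  congr 1
  apply Finset.prod_congr rfl
  intro i _
  congr 2
  omega

lemma Pprod_pos {q m r : ℕ} (hq : 2 ≤ q) (h : r ≤ m) : 0 < Pprod q m r := by
  rw [Pprod]
  apply Finset.prod_pos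
  intro i hi
  rw [Finset.mem_range] at hi
  have h2 : q ≤ q ^ (m - i) := by
    calc q = q ^ 1 := (pow_one q).symm
    _ ≤ q ^ (m - i) := Nat.pow_le_pow_right (by omega) (by omega)
  omega

lemma keyArith (P A B : ℕ) (hA : 1 ≤ A) (hB : 1 ≤ B) :
    P * (A - 1) + (B - 1) * (A * P) = B * A * P - P := by
  obtain ⟨a, rfl⟩ : ∃ a, A = a + 1 := ⟨A - 1, by omega⟩
  obtain ⟨b, rfl⟩ : ∃ b, B = b + 1 := ⟨B - 1, by omega⟩
  simp only [Nat.add_sub_cancel]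
  apply (Nat.sub_eq_of_eq_add ?_).symm
  ring

lemma gbN_mul_Pprod {q : ℕ} (hq : 2 ≤ q) : ∀ m r, r ≤ m →
    gbN q m r * Pprod q r r = Pprod q m r := by
  intro m
  induction m with
  | zero => intro r hr; interval_cases r; simp
  | succ m ih =>
    intro r hr
    cases r with
    | zero => simp
    | succ r =>
      rcases Nat.lt_or_ge r m with hrm | hrm
      · have e1 : gbN q m (r+1) * Pprod q (r+1) (r+1) = Pprod q m r * (q ^ (m - r) - 1) := by
          rw [ih (r+1) (by omega), Pprod_succ]
        have e2 : q ^ (m - r) * gbN q m r * Pprod q (r+1) (r+1)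
            = (q ^ (r+1) - 1) * (q ^ (m - r) * Pprod q m r) := by
          rw [Pprod_succ' q r r, ← ih r (by omega)]; ring
        rw [gbN_succ, add_mul, e1, mul_assoc, ← mul_assoc (q ^ (m - r)), e2,
          Pprod_succ' q m r]
        have hBA : q ^ (m+1) = q ^ (r+1) * q ^ (m - r) := by rw [← pow_add]; congr 1; omega
        rw [hBA]
        have h3 : (q ^ (r+1) * q ^ (m - r) - 1) * Pprod q m r
            = q ^ (r+1) * q ^ (m - r) * Pprod q m r - Pprod q m r := by
          rw [tsub_mul, one_mul]
        rw [h3]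
        exact keyArith (Pprod q m r) (q ^ (m - r)) (q ^ (r+1))
          (Nat.one_le_pow _ _ (by omega)) (Nat.one_le_pow _ _ (by omega))
      · have : r = m := by omega
        subst this
        rw [gbN_succ, gbN_of_lt (by omega), gbN_self]
        simp

lemma gbN_pos {q m r : ℕ} (hq : 2 ≤ q) (h : r ≤ m) : 0 < gbN q m r := by
  have h1 := gbN_mul_Pprod hq m r h
  have hP := Pprod_pos hq h
  rcases Nat.eq_zero_or_pos (gbN q m r) with h0 | h0
  · rw [h0, zero_mul] at h1; omega
  · exact h0

lemma gaussBinom_eq_gbN {q m r : ℕ} (hq : 2 ≤ q) (h : r ≤ m) :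
    gaussBinom q m r = gbN q m r := by
  have hd : (∏ i ∈ Finset.range r, (q ^ (r - i) - 1)) = Pprod q r r := rfl
  have hn : (∏ i ∈ Finset.range r, (q ^ (m - i) - 1)) = Pprod q m r := rfl
  rw [gaussBinom, hd, hn, ← gbN_mul_Pprod hq m r h,
    Nat.mul_div_cancel _ (Pprod_pos hq le_rfl)]

lemma gbN_identity1 {q m r : ℕ} (hq : 2 ≤ q) (h : r ≤ m) :
    gbN q (m+1) (r+1) * (q ^ (r+1) - 1) = (q ^ (m+1) - 1) * gbN q m r := by
  apply Nat.eq_of_mul_eq_mul_right (Pprod_pos hq (le_refl r))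
  calc gbN q (m+1) (r+1) * (q ^ (r+1) - 1) * Pprod q r r
      = gbN q (m+1) (r+1) * Pprod q (r+1) (r+1) := by rw [Pprod_succ']; ring
    _ = Pprod q (m+1) (r+1) := gbN_mul_Pprod hq _ _ (by omega)
    _ = (q ^ (m+1) - 1) * Pprod q m r := Pprod_succ' q m r
    _ = (q ^ (m+1) - 1) * (gbN q m r * Pprod q r r) := by rw [gbN_mul_Pprod hq m r h]
    _ = (q ^ (m+1) - 1) * gbN q m r * Pprod q r r := by ring

end AuxGauss
section AuxCount
open Module

variable {F : Type*} [Field F] [Fintype F] {n : ℕ}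

set_option linter.unusedSectionVars false
set_option maxHeartbeats 1000000

lemma cnt_zero {k : ℕ} {B : Finset (Submodule F (Fin n → F))}
    (hB1 : ∀ K ∈ B, finrank F K = k) {U W : Submodule F (Fin n → F)}
    (hW : finrank F W < k) : (B.filter fun K => U ≤ K ∧ K ≤ W).card = 0 := by
  rw [Finset.card_eq_zero, Finset.filter_eq_empty_iff]
  rintro K hK ⟨hUK, hKW⟩
  have h := Submodule.finrank_mono hKW
  rw [hB1 K hK] at h
  omega

lemma LC_not_le (U X W : Submodule F (Fin n → F)) :
    (Finset.univ.filter fun U' : Submodule F (Fin n → F) =>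
        (U ≤ U' ∧ U' ≤ X ∧ finrank F U' = finrank F U + 1) ∧ ¬ U' ≤ W).card
    + (Finset.univ.filter fun U' : Submodule F (Fin n → F) =>
        U ≤ U' ∧ U' ≤ X ⊓ W ∧ finrank F U' = finrank F U + 1).card
    = (Finset.univ.filter fun U' : Submodule F (Fin n → F) =>
        U ≤ U' ∧ U' ≤ X ∧ finrank F U' = finrank F U + 1).card := by
  classical
  have h := Finset.card_filter_add_card_filter_not
    (s := Finset.univ.filter fun U' : Submodule F (Fin n → F) =>
      U ≤ U' ∧ U' ≤ X ∧ finrank F U' = finrank F U + 1) (p := fun U' => U' ≤ W)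
  rw [Finset.filter_filter, Finset.filter_filter] at h
  have e2 : (Finset.univ.filter fun U' : Submodule F (Fin n → F) =>
        (U ≤ U' ∧ U' ≤ X ∧ finrank F U' = finrank F U + 1) ∧ U' ≤ W)
      = (Finset.univ.filter fun U' : Submodule F (Fin n → F) =>
        U ≤ U' ∧ U' ≤ X ⊓ W ∧ finrank F U' = finrank F U + 1) := by
    ext U'
    simp only [Finset.mem_filter, Finset.mem_univ, true_and, le_inf_iff]
    tauto
  rw [e2] at h
  omega

lemma lambda_i {t k lam : ℕ} {B : Finset (Submodule F (Fin n → F))}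
    (hq : 2 ≤ Fintype.card F)
    (hB : IsDesign F n t k lam B) (ht : t ≤ k) (hk : k ≤ n) :
    ∀ d, d ≤ t → ∀ U : Submodule F (Fin n → F), finrank F U = t - d →
      (B.filter fun K => U ≤ K).card * gbN (Fintype.card F) (n-t) (k-t)
        = lam * gbN (Fintype.card F) (n-(t-d)) (k-(t-d)) := by
  intro d
  induction d with
  | zero =>
    intro _ U hU
    simp only [Nat.sub_zero] at hU ⊢
    rw [hB.2 U hU]
  | succ d ih =>
    intro hd U hU
    rw [← hU]
    have hfU1 : finrank F U + 1 = t - d := by omega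
    have hfUk : finrank F U < k := by omega
    have hfUn : finrank F U < n := by omega
    have hq1 : (1:ℕ) ≤ Fintype.card F := by omega
    set S := Finset.univ.filter fun U' : Submodule F (Fin n → F) =>
      U ≤ U' ∧ U' ≤ (⊤ : Submodule F (Fin n → F)) ∧ finrank F U' = finrank F U + 1 with hSdef
    have hDC : ∑ K ∈ B.filter (fun K => U ≤ K), (S.filter fun U' => U' ≤ K).card
        = ∑ U' ∈ S, ((B.filter (fun K => U ≤ K)).filter fun K => U' ≤ K).card := by
      simp only [Finset.card_filter]
      exact Finset.sum_comm
    have hrow : ∀ K ∈ B.filter (fun K => U ≤ K),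
        (S.filter fun U' => U' ≤ K).card *
          (Fintype.card F ^ (finrank F U + 1) - Fintype.card F ^ finrank F U)
        = Fintype.card F ^ k - Fintype.card F ^ finrank F U := by
      intro K hK
      rw [Finset.mem_filter] at hK
      have e : S.filter (fun U' => U' ≤ K) = Finset.univ.filter
          fun U' : Submodule F (Fin n → F) =>
            U ≤ U' ∧ U' ≤ K ∧ finrank F U' = finrank F U + 1 := by
        rw [hSdef, Finset.filter_filter]
        ext U'
        simp only [Finset.mem_filter, Finset.mem_univ, true_and, le_top]
        tauto
      rw [e]
      have l1 := line_count U K hK.2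
      rw [hB.1 K hK.1] at l1
      exact l1
    have hcol : ∀ U' ∈ S, ((B.filter (fun K => U ≤ K)).filter fun K => U' ≤ K).card *
        gbN (Fintype.card F) (n-t) (k-t)
        = lam * gbN (Fintype.card F) (n-(finrank F U + 1)) (k-(finrank F U + 1)) := by
      intro U' hU'
      rw [hSdef, Finset.mem_filter] at hU'
      obtain ⟨-, hUU', -, hrkU'⟩ := hU'
      have e : (B.filter (fun K => U ≤ K)).filter (fun K => U' ≤ K)
          = B.filter (fun K => U' ≤ K) := by
        rw [Finset.filter_filter]
        ext K
        simp only [Finset.mem_filter]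
        constructor
        · rintro ⟨h1, -, h3⟩; exact ⟨h1, h3⟩
        · rintro ⟨h1, h2⟩; exact ⟨h1, hUU'.trans h2, h2⟩
      rw [e]
      have := ih (by omega) U' (by omega)
      rw [show t - d = finrank F U + 1 from hfU1.symm] at this
      exact this
    -- S.card * x = q^n - q^fU
    have hStop : S.card * (Fintype.card F ^ (finrank F U + 1) - Fintype.card F ^ finrank F U)
        = Fintype.card F ^ n - Fintype.card F ^ finrank F U := by
      have l := line_count U ⊤ le_top
      rw [finrank_top, Module.finrank_fin_fun] at l
      rw [hSdef]
      exact l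
    -- assemble
    set x := Fintype.card F ^ (finrank F U + 1) - Fintype.card F ^ finrank F U with hxdef
    set G := gbN (Fintype.card F) (n-t) (k-t) with hGdef
    set g' := gbN (Fintype.card F) (n-(finrank F U + 1)) (k-(finrank F U + 1)) with hg'def
    have h1 : (∑ K ∈ B.filter (fun K => U ≤ K), (S.filter fun U' => U' ≤ K).card) * (x * G)
        = (B.filter (fun K => U ≤ K)).card *
          ((Fintype.card F ^ k - Fintype.card F ^ finrank F U) * G) := by
      rw [Finset.sum_mul]
      rw [Finset.sum_congr rfl (fun K hK => show (S.filter fun U' => U' ≤ K).card * (x * G)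
        = (Fintype.card F ^ k - Fintype.card F ^ finrank F U) * G from by
          rw [← mul_assoc, hrow K hK])]
      rw [Finset.sum_const, smul_eq_mul]
    have h2 : (∑ U' ∈ S, ((B.filter (fun K => U ≤ K)).filter fun K => U' ≤ K).card) * (x * G)
        = lam * g' * (Fintype.card F ^ n - Fintype.card F ^ finrank F U) := by
      rw [Finset.sum_mul]
      rw [Finset.sum_congr rfl (fun U' hU' =>
        show ((B.filter (fun K => U ≤ K)).filter fun K => U' ≤ K).card * (x * G)
          = (lam * g') * x from by
          rw [show ((B.filter (fun K => U ≤ K)).filter fun K => U' ≤ K).card * (x * G)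
            = (((B.filter (fun K => U ≤ K)).filter fun K => U' ≤ K).card * G) * x from by ring,
            hcol U' hU'])]
      rw [Finset.sum_const, smul_eq_mul]
      calc S.card * (lam * g' * x) = lam * g' * (S.card * x) := by ring
        _ = lam * g' * (Fintype.card F ^ n - Fintype.card F ^ finrank F U) := by rw [hStop]
    have key : (B.filter (fun K => U ≤ K)).card *
        ((Fintype.card F ^ k - Fintype.card F ^ finrank F U) * G)
        = lam * g' * (Fintype.card F ^ n - Fintype.card F ^ finrank F U) := by
      rw [← h1, ← h2, hDC]
    -- factor out q^fU
    have hek : Fintype.card F ^ k - Fintype.card F ^ finrank F U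
        = Fintype.card F ^ finrank F U * (Fintype.card F ^ (k - finrank F U) - 1) := by
      rw [Nat.mul_sub, mul_one, ← pow_add]
      congr 2
      omega
    have hen : Fintype.card F ^ n - Fintype.card F ^ finrank F U
        = Fintype.card F ^ finrank F U * (Fintype.card F ^ (n - finrank F U) - 1) := by
      rw [Nat.mul_sub, mul_one, ← pow_add]
      congr 2
      omega
    rw [hek, hen] at key
    have key3 : (B.filter (fun K => U ≤ K)).card * G * (Fintype.card F ^ (k - finrank F U) - 1)
        = lam * g' * (Fintype.card F ^ (n - finrank F U) - 1) := by
      apply Nat.eq_of_mul_eq_mul_right (pow_pos (show 0 < Fintype.card F by omega) (finrank F U))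
      calc (B.filter (fun K => U ≤ K)).card * G * (Fintype.card F ^ (k - finrank F U) - 1)
            * Fintype.card F ^ finrank F U
          = (B.filter (fun K => U ≤ K)).card *
            ((Fintype.card F ^ finrank F U * (Fintype.card F ^ (k - finrank F U) - 1)) * G) := by
            ring
        _ = lam * g' * (Fintype.card F ^ finrank F U *
            (Fintype.card F ^ (n - finrank F U) - 1)) := key
        _ = lam * g' * (Fintype.card F ^ (n - finrank F U) - 1)
            * Fintype.card F ^ finrank F U := by ring
    have hid := gbN_identity1 (q := Fintype.card F)
      (m := n - finrank F U - 1) (r := k - finrank F U - 1) hq (by omega)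
    rw [show n - finrank F U - 1 + 1 = n - finrank F U from by omega,
      show k - finrank F U - 1 + 1 = k - finrank F U from by omega] at hid
    rw [show n - (finrank F U + 1) = n - finrank F U - 1 from by omega,
      show k - (finrank F U + 1) = k - finrank F U - 1 from by omega] at hg'def
    have key4 : (B.filter (fun K => U ≤ K)).card * G * (Fintype.card F ^ (k - finrank F U) - 1)
        = lam * gbN (Fintype.card F) (n - finrank F U) (k - finrank F U)
          * (Fintype.card F ^ (k - finrank F U) - 1) := by
      rw [key3, hg'def]
      calc lam * gbN (Fintype.card F) (n - finrank F U - 1) (k - finrank F U - 1)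
            * (Fintype.card F ^ (n - finrank F U) - 1)
          = lam * ((Fintype.card F ^ (n - finrank F U) - 1)
            * gbN (Fintype.card F) (n - finrank F U - 1) (k - finrank F U - 1)) := by ring
        _ = lam * (gbN (Fintype.card F) (n - finrank F U) (k - finrank F U)
            * (Fintype.card F ^ (k - finrank F U) - 1)) := by rw [← hid]
        _ = lam * gbN (Fintype.card F) (n - finrank F U) (k - finrank F U)
            * (Fintype.card F ^ (k - finrank F U) - 1) := by ring
    have hpos : 0 < Fintype.card F ^ (k - finrank F U) - 1 := by
      have : Fintype.card F ≤ Fintype.card F ^ (k - finrank F U) := by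
        calc Fintype.card F = Fintype.card F ^ 1 := (pow_one _).symm
          _ ≤ Fintype.card F ^ (k - finrank F U) := Nat.pow_le_pow_right (by omega) (by omega)
      omega
    exact Nat.eq_of_mul_eq_mul_right hpos key4

end AuxCount
section AuxMain
open Module

variable {F : Type*} [Field F] [Fintype F] {n : ℕ}

set_option linter.unusedSectionVars false
set_option maxHeartbeats 2000000

lemma main_count {t k lam : ℕ} {B : Finset (Submodule F (Fin n → F))}
    (hq : 2 ≤ Fintype.card F)
    (hB : IsDesign F n t k lam B) (ht : t ≤ k) (hk : k ≤ n) :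
    ∀ j i, i + j ≤ t → ∀ U W : Submodule F (Fin n → F), U ≤ W → finrank F U = i →
      finrank F W = n - j →
      (B.filter fun K => U ≤ K ∧ K ≤ W).card * gbN (Fintype.card F) (n-t) (k-t)
        = lam * gbN (Fintype.card F) (n-(i+j)) (k-i) := by
  intro j
  induction j with
  | zero =>
    intro i hij U W hUW hU hW
    subst hU
    have hWtop : W = ⊤ := by
      apply Submodule.eq_top_of_finrank_eq
      rw [hW, Module.finrank_fin_fun]
      omega
    subst hWtop
    have e : B.filter (fun K => U ≤ K ∧ K ≤ ⊤) = B.filter (fun K => U ≤ K) := by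
      ext K
      simp only [Finset.mem_filter, le_top, and_true]
    rw [e]
    have hd := lambda_i hq hB ht hk (t - finrank F U) (by omega) U (by omega)
    rw [show t - (t - finrank F U) = finrank F U from by omega] at hd
    simpa using hd
  | succ j ihj =>
    intro i hij U W hUW hU hW
    subst hU
    rcases Nat.lt_or_ge n (k + j) with hkn | hkn
    · -- degenerate: no block fits in W
      have hWk : finrank F W < k := by rw [hW]; omega
      rw [cnt_zero hB.1 hWk, zero_mul, gbN_of_lt (by omega), mul_zero]
    · -- main case : k + j ≤ n
      have hik : finrank F U + 1 ≤ k := by omega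
      have hq1 : (1:ℕ) ≤ Fintype.card F := by omega
      have hWlt : W < ⊤ := by
        apply lt_of_le_of_ne le_top
        intro h
        rw [h, finrank_top, Module.finrank_fin_fun] at hW
        omega
      obtain ⟨v, -, hvW⟩ := SetLike.exists_of_lt hWlt
      have hW₁rk : finrank F ↥(W ⊔ (F ∙ v)) = n - j := by
        rw [finrank_sup_span hvW, hW]; omega
      set W₁ := W ⊔ (F ∙ v) with hW₁def
      have hWW₁ : W ≤ W₁ := le_sup_left
      have hIH1 := ihj (finrank F U) (by omega) U W₁ (hUW.trans hWW₁) rfl hW₁rk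
      -- split of the count
      have hsplit := Finset.card_filter_add_card_filter_not
        (s := B.filter (fun K => U ≤ K ∧ K ≤ W₁)) (p := fun K => K ≤ W)
      rw [Finset.filter_filter, Finset.filter_filter] at hsplit
      have e1 : B.filter (fun K => (U ≤ K ∧ K ≤ W₁) ∧ K ≤ W)
          = B.filter (fun K => U ≤ K ∧ K ≤ W) := by
        ext K
        simp only [Finset.mem_filter]
        constructor
        · rintro ⟨hKB, ⟨h1, h2⟩, h3⟩; exact ⟨hKB, h1, h3⟩
        · rintro ⟨hKB, h1, h2⟩; exact ⟨hKB, ⟨h1, h2.trans hWW₁⟩, h2⟩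
      rw [e1] at hsplit
      -- the finset of (i+1)-spaces in W₁ not in W
      set Sx := Finset.univ.filter (fun U' : Submodule F (Fin n → F) =>
        (U ≤ U' ∧ U' ≤ W₁ ∧ finrank F U' = finrank F U + 1) ∧ ¬ U' ≤ W) with hSxdef
      have hDC : ∑ K ∈ B.filter (fun K => U ≤ K ∧ K ≤ W₁), (Sx.filter fun U' => U' ≤ K).card
          = ∑ U' ∈ Sx, ((B.filter (fun K => U ≤ K ∧ K ≤ W₁)).filter fun K => U' ≤ K).card := by
        simp only [Finset.card_filter]
        exact Finset.sum_comm
      -- Sx.card * x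
      have hSx : Sx.card *
          (Fintype.card F ^ (finrank F U + 1) - Fintype.card F ^ finrank F U)
          = Fintype.card F ^ (n-j) - Fintype.card F ^ (n-(j+1)) := by
        have hLC := LC_not_le U W₁ W
        have eW : W₁ ⊓ W = W := inf_eq_right.mpr hWW₁
        rw [eW, ← hSxdef] at hLC
        have l1 := line_count U W₁ (hUW.trans hWW₁)
        have l2 := line_count U W hUW
        rw [hW₁rk] at l1
        rw [hW] at l2
        have hm1 : Fintype.card F ^ finrank F U ≤ Fintype.card F ^ (n-(j+1)) :=
          Nat.pow_le_pow_right hq1 (by omega)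
        have hm2 : Fintype.card F ^ (n-(j+1)) ≤ Fintype.card F ^ (n-j) :=
          Nat.pow_le_pow_right hq1 (by omega)
        have hx := congrArg (fun z => z *
          (Fintype.card F ^ (finrank F U + 1) - Fintype.card F ^ finrank F U)) hLC
        simp only [add_mul] at hx
        rw [l1, l2] at hx
        omega
      -- rows
      have hrow0 : ∀ K ∈ B.filter (fun K => U ≤ K ∧ K ≤ W₁), K ≤ W →
          (Sx.filter fun U' => U' ≤ K).card = 0 := by
        intro K _ hKW
        rw [Finset.card_eq_zero, Finset.filter_eq_empty_iff]
        intro U' hU'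
        rw [hSxdef, Finset.mem_filter] at hU'
        exact fun hcon => hU'.2.2 (hcon.trans hKW)
      have hrow1 : ∀ K ∈ B.filter (fun K => U ≤ K ∧ K ≤ W₁), ¬ K ≤ W →
          (Sx.filter fun U' => U' ≤ K).card *
            (Fintype.card F ^ (finrank F U + 1) - Fintype.card F ^ finrank F U)
          = Fintype.card F ^ k - Fintype.card F ^ (k-1) := by
        intro K hKs hKnW
        rw [Finset.mem_filter] at hKs
        obtain ⟨hKB, hUK, hKW₁⟩ := hKs
        have hrkK : finrank F K = k := hB.1 K hKB
        have hsup : K ⊔ W = W₁ := by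
          apply Submodule.eq_of_le_of_finrank_le (sup_le hKW₁ hWW₁)
          have hlt : W < K ⊔ W := lt_of_le_of_ne le_sup_right
            (fun h => hKnW ((le_sup_left : K ≤ K ⊔ W).trans h.symm.le))
          have h2 := Submodule.finrank_lt_finrank_of_lt hlt
          rw [hW] at h2
          rw [hW₁rk]
          omega
        have hinf : finrank F ↥(K ⊓ W) = k - 1 := by
          have h3 := Submodule.finrank_sup_add_finrank_inf_eq K W
          rw [hsup, hW₁rk, hrkK, hW] at h3
          omega
        have e2 : Sx.filter (fun U' => U' ≤ K) = Finset.univ.filter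
            (fun U' : Submodule F (Fin n → F) =>
              (U ≤ U' ∧ U' ≤ K ∧ finrank F U' = finrank F U + 1) ∧ ¬ U' ≤ W) := by
          rw [hSxdef, Finset.filter_filter]
          ext U'
          simp only [Finset.mem_filter, Finset.mem_univ, true_and]
          constructor
          · rintro ⟨⟨⟨a1, a2, a3⟩, a4⟩, a5⟩; exact ⟨⟨a1, a5, a3⟩, a4⟩
          · rintro ⟨⟨a1, a2, a3⟩, a4⟩; exact ⟨⟨⟨a1, a2.trans hKW₁, a3⟩, a4⟩, a2⟩
        have hLC := LC_not_le U K W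
        have l1 := line_count U K hUK
        have l2 := line_count U (K ⊓ W) (le_inf hUK hUW)
        rw [hrkK] at l1
        rw [hinf] at l2
        have hm1 : Fintype.card F ^ finrank F U ≤ Fintype.card F ^ (k-1) :=
          Nat.pow_le_pow_right hq1 (by omega)
        have hm2 : Fintype.card F ^ (k-1) ≤ Fintype.card F ^ k :=
          Nat.pow_le_pow_right hq1 (by omega)
        have hx := congrArg (fun z => z *
          (Fintype.card F ^ (finrank F U + 1) - Fintype.card F ^ finrank F U)) hLC
        simp only [add_mul] at hx
        rw [l1, l2] at hx
        rw [e2]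
        omega
      -- columns
      have hcol : ∀ U' ∈ Sx, ((B.filter (fun K => U ≤ K ∧ K ≤ W₁)).filter
            fun K => U' ≤ K).card * gbN (Fintype.card F) (n-t) (k-t)
          = lam * gbN (Fintype.card F) (n-(finrank F U + 1 + j)) (k-(finrank F U + 1)) := by
        intro U' hU'
        rw [hSxdef, Finset.mem_filter] at hU'
        obtain ⟨-, ⟨hUU', hU'W₁, hrkU'⟩, -⟩ := hU'
        have e3 : (B.filter (fun K => U ≤ K ∧ K ≤ W₁)).filter (fun K => U' ≤ K)
            = B.filter (fun K => U' ≤ K ∧ K ≤ W₁) := by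
          rw [Finset.filter_filter]
          ext K
          simp only [Finset.mem_filter]
          constructor
          · rintro ⟨hKB, ⟨b1, b2⟩, b3⟩; exact ⟨hKB, b3, b2⟩
          · rintro ⟨hKB, b1, b2⟩; exact ⟨hKB, ⟨hUU'.trans b1, b2⟩, b1⟩
        rw [e3]
        exact ihj (finrank F U + 1) (by omega) U' W₁ hU'W₁ hrkU' hW₁rk
      -- assemble
      set x := Fintype.card F ^ (finrank F U + 1) - Fintype.card F ^ finrank F U with hxdef
      set G := gbN (Fintype.card F) (n-t) (k-t) with hGdef
      set g2 := gbN (Fintype.card F) (n-(finrank F U + 1 + j)) (k-(finrank F U + 1)) with hg2def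
      set D := (B.filter (fun K => (U ≤ K ∧ K ≤ W₁) ∧ ¬ K ≤ W)).card with hDdef
      have hEL : (∑ K ∈ B.filter (fun K => U ≤ K ∧ K ≤ W₁),
            (Sx.filter fun U' => U' ≤ K).card) * (x * G)
          = D * ((Fintype.card F ^ k - Fintype.card F ^ (k-1)) * G) := by
        rw [Finset.sum_mul,
          ← Finset.sum_filter_add_sum_filter_not (B.filter (fun K => U ≤ K ∧ K ≤ W₁))
            (fun K => K ≤ W)]
        have hz : ∑ K ∈ (B.filter (fun K => U ≤ K ∧ K ≤ W₁)).filter (fun K => K ≤ W),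
            (Sx.filter fun U' => U' ≤ K).card * (x * G) = 0 := by
          apply Finset.sum_eq_zero
          intro K hK
          rw [Finset.mem_filter] at hK
          rw [hrow0 K hK.1 hK.2, zero_mul]
        have hc : ∑ K ∈ (B.filter (fun K => U ≤ K ∧ K ≤ W₁)).filter (fun K => ¬ K ≤ W),
            (Sx.filter fun U' => U' ≤ K).card * (x * G)
            = D * ((Fintype.card F ^ k - Fintype.card F ^ (k-1)) * G) := by
          have hcc : ∀ K ∈ (B.filter (fun K => U ≤ K ∧ K ≤ W₁)).filter (fun K => ¬ K ≤ W),
              (Sx.filter fun U' => U' ≤ K).card * (x * G)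
              = (Fintype.card F ^ k - Fintype.card F ^ (k-1)) * G := by
            intro K hK
            rw [Finset.mem_filter] at hK
            rw [← mul_assoc, hrow1 K hK.1 hK.2]
          rw [Finset.sum_congr rfl hcc, Finset.sum_const, smul_eq_mul,
            Finset.filter_filter, ← hDdef]
        rw [hz, hc, zero_add]
      have hER : (∑ U' ∈ Sx, ((B.filter (fun K => U ≤ K ∧ K ≤ W₁)).filter
            fun K => U' ≤ K).card) * (x * G)
          = lam * g2 * (Fintype.card F ^ (n-j) - Fintype.card F ^ (n-(j+1))) := by
        rw [Finset.sum_mul]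
        rw [Finset.sum_congr rfl (fun U' hU' => by
          show ((B.filter (fun K => U ≤ K ∧ K ≤ W₁)).filter fun K => U' ≤ K).card * (x * G)
            = lam * g2 * x
          rw [show ((B.filter (fun K => U ≤ K ∧ K ≤ W₁)).filter fun K => U' ≤ K).card * (x * G)
            = (((B.filter (fun K => U ≤ K ∧ K ≤ W₁)).filter fun K => U' ≤ K).card * G) * x
            from by ring, hcol U' hU'])]
        rw [Finset.sum_const, smul_eq_mul]
        calc Sx.card * (lam * g2 * x) = lam * g2 * (Sx.card * x) := by ring
          _ = lam * g2 * (Fintype.card F ^ (n-j) - Fintype.card F ^ (n-(j+1))) := by rw [hSx]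
      have hKey : D * ((Fintype.card F ^ k - Fintype.card F ^ (k-1)) * G)
          = lam * g2 * (Fintype.card F ^ (n-j) - Fintype.card F ^ (n-(j+1))) := by
        rw [← hEL, ← hER, hDC]
      -- power factorizations
      have hp1 : Fintype.card F ^ k - Fintype.card F ^ (k-1)
          = Fintype.card F ^ (k-1) * (Fintype.card F - 1) := by
        rw [Nat.mul_sub, mul_one, ← pow_succ]
        congr 2
        omega
      have hp2 : Fintype.card F ^ (n-j) - Fintype.card F ^ (n-(j+1))
          = (Fintype.card F ^ (k-1) * (Fintype.card F - 1)) * Fintype.card F ^ (n-j-k) := by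
        calc Fintype.card F ^ (n-j) - Fintype.card F ^ (n-(j+1))
            = Fintype.card F ^ (n-(j+1)) * (Fintype.card F - 1) := by
              rw [Nat.mul_sub, mul_one, ← pow_succ]
              congr 2
              omega
          _ = (Fintype.card F ^ (k-1) * (Fintype.card F - 1)) * Fintype.card F ^ (n-j-k) := by
              rw [show n-(j+1) = (k-1) + (n-j-k) from by omega, pow_add]
              ring
      have hDG : D * G = lam * (Fintype.card F ^ (n-j-k) * g2) := by
        have hpos : 0 < Fintype.card F ^ (k-1) * (Fintype.card F - 1) :=
          Nat.mul_pos (pow_pos (by omega) _) (by omega)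
        apply Nat.eq_of_mul_eq_mul_right hpos
        calc D * G * (Fintype.card F ^ (k-1) * (Fintype.card F - 1))
            = D * ((Fintype.card F ^ (k-1) * (Fintype.card F - 1)) * G) := by ring
          _ = D * ((Fintype.card F ^ k - Fintype.card F ^ (k-1)) * G) := by rw [hp1]
          _ = lam * g2 * (Fintype.card F ^ (n-j) - Fintype.card F ^ (n-(j+1))) := hKey
          _ = lam * g2 * ((Fintype.card F ^ (k-1) * (Fintype.card F - 1))
              * Fintype.card F ^ (n-j-k)) := by rw [hp2]
          _ = lam * (Fintype.card F ^ (n-j-k) * g2)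
              * (Fintype.card F ^ (k-1) * (Fintype.card F - 1)) := by ring
      -- Pascal
      have hPascal : gbN (Fintype.card F) (n-(finrank F U + j)) (k - finrank F U)
          = gbN (Fintype.card F) (n-(finrank F U + (j+1))) (k - finrank F U)
            + Fintype.card F ^ (n-j-k) * g2 := by
        rw [show n - (finrank F U + j) = (n - (finrank F U + (j+1))) + 1 from by omega,
          show k - finrank F U = (k - (finrank F U + 1)) + 1 from by omega,
          gbN_succ,
          show n - (finrank F U + (j+1)) - (k - (finrank F U + 1)) = n-j-k from by omega,
          hg2def,
          show n - (finrank F U + 1 + j) = n - (finrank F U + (j+1)) from by omega]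
      have hfin : (B.filter (fun K => U ≤ K ∧ K ≤ W)).card * G + D * G
          = lam * gbN (Fintype.card F) (n-(finrank F U + j)) (k - finrank F U) := by
        rw [← add_mul, hsplit]
        exact hIH1
      rw [hPascal, mul_add, hDG] at hfin
      omega

end AuxMain

/-- the complementary design `B^⊥` is a `t-(n, n-k, λ^⊥; q)` design. -/
theorem perp_design (F : Type*) [Field F] [Fintype F] (n t k lam : ℕ)
    (ht : t ≤ k) (hk : k ≤ n)
    (B : Finset (Submodule F (Fin n → F))) (hB : IsDesign F n t k lam B) :
    IsDesign F n t (n - k)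
      (lam * gaussBinom (Fintype.card F) (n - t) k /
        gaussBinom (Fintype.card F) (n - t) (k - t))
      (B.image stdPerp) := by
  classical
  have hq : 2 ≤ Fintype.card F := Fintype.one_lt_card
  constructor
  · intro P hP
    rw [Finset.mem_image] at hP
    obtain ⟨K, hK, rfl⟩ := hP
    rw [finrank_stdPerp, hB.1 K hK]
  · intro T hT
    have hinj : Function.Injective (stdPerp (F := F) (n := n)) :=
      Function.LeftInverse.injective stdPerp_stdPerp
    rw [Finset.filter_image, Finset.card_image_of_injective _ hinj]
    have e1 : B.filter (fun K => T ≤ stdPerp K)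
        = B.filter (fun K => (⊥ : Submodule F (Fin n → F)) ≤ K ∧ K ≤ stdPerp T) := by
      ext K
      simp only [Finset.mem_filter]
      constructor
      · rintro ⟨h1, h2⟩; exact ⟨h1, bot_le, le_stdPerp_iff.mp h2⟩
      · rintro ⟨h1, -, h2⟩; exact ⟨h1, le_stdPerp_iff.mpr h2⟩
    rw [e1]
    have hrkT : Module.finrank F ↥(stdPerp T) = n - t := by rw [finrank_stdPerp, hT]
    have hmain := main_count hq hB ht hk t 0 (by omega) ⊥ (stdPerp T) bot_le
      (finrank_bot F _) hrkT
    rw [show n - (0 + t) = n - t from by rw [Nat.zero_add],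
      show k - 0 = k from rfl] at hmain
    have hGpos : 0 < gbN (Fintype.card F) (n-t) (k-t) := gbN_pos hq (by omega)
    by_cases hkn : k ≤ n - t
    · rw [gaussBinom_eq_gbN hq hkn, gaussBinom_eq_gbN hq (by omega),
        ← hmain, Nat.mul_div_cancel _ hGpos]
    · have h0 : gbN (Fintype.card F) (n-t) k = 0 := gbN_of_lt (by omega)
      rw [h0, mul_zero] at hmain
      have hcnt : (B.filter (fun K => (⊥ : Submodule F (Fin n → F)) ≤ K ∧ K ≤ stdPerp T)).card
          = 0 := by
        rcases Nat.mul_eq_zero.mp hmain with h | h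
        · exact h
        · omega
      rw [hcnt]
      have hg0 : gaussBinom (Fintype.card F) (n-t) k = 0 := by
        rw [gaussBinom]
        have hz : (∏ i ∈ Finset.range k, ((Fintype.card F) ^ (n - t - i) - 1)) = 0 := by
          apply Finset.prod_eq_zero (Finset.mem_range.mpr (show n - t < k by omega))
          rw [show n - t - (n - t) = 0 from by omega, pow_zero]
          omega
        rw [hz, Nat.zero_div]
      rw [hg0, mul_zero, Nat.zero_div]
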